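/- There exists a closed 5-prince's tour on the 6×6 chessboard; that is, the graph whose vertices are the cells of the 6×6 board, with two cells (i,j) and (u,v) adjacent if and only if |i-u|+|j-v| = 5, has a Hamiltonian cycle. -/

import Mathlib

/-- The `k`-prince graph on an `m × n` board: cells `(i,j)` and `(u,v)` are adjacent
iff `|i - u| + |j - v| = k`. -/
def princeGraph (m n k : ℕ) : SimpleGraph (Fin m × Fin n) where
  Adj p q := p ≠ q ∧ |(p.1 : ℤ) - (q.1 : ℤ)| + |(p.2 : ℤ) - (q.2 : ℤ)| = k
  symm := by
    constructor
    rintro p q ⟨hne, h⟩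
    refine ⟨hne.symm, ?_⟩
    rw [abs_sub_comm ((q.1 : ℤ)), abs_sub_comm ((q.2 : ℤ))]
    exact h
  loopless := ⟨fun p h => h.1 rfl⟩

open SimpleGraph Walk

instance : DecidableRel (princeGraph 6 6 5).Adj := fun p q =>
  inferInstanceAs (Decidable
    (p ≠ q ∧ |(p.1 : ℤ) - (q.1 : ℤ)| + |(p.2 : ℤ) - (q.2 : ℤ)| = (5 : ℕ)))

private def e (a b c d : Fin 6) : (princeGraph 6 6 5).Adj (a,b) (c,d) →
    (princeGraph 6 6 5).Walk (c,d) (5,0) → (princeGraph 6 6 5).Walk (a,b) (5,0) :=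
  fun h p => Walk.cons h p

def tour : (princeGraph 6 6 5).Walk (0,0) (5,0) :=
  e 0 0 2 3 (by decide) <|
  e 2 3 4 0 (by decide) <|
  e 4 0 1 2 (by decide) <|
  e 1 2 5 1 (by decide) <|
  e 5 1 3 4 (by decide) <|
  e 3 4 0 2 (by decide) <|
  e 0 2 4 1 (by decide) <|
  e 4 1 1 3 (by decide) <|
  e 1 3 4 5 (by decide) <|
  e 4 5 2 2 (by decide) <|
  e 2 2 5 4 (by decide) <|
  e 5 4 3 1 (by decide) <|
  e 3 1 1 4 (by decide) <|
  e 1 4 5 5 (by decide) <|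
  e 5 5 3 2 (by decide) <|
  e 3 2 0 4 (by decide) <|
  e 0 4 4 3 (by decide) <|
  e 4 3 1 5 (by decide) <|
  e 1 5 0 1 (by decide) <|
  e 0 1 2 4 (by decide) <|
  e 2 4 1 0 (by decide) <|
  e 1 0 3 3 (by decide) <|
  e 3 3 0 5 (by decide) <|
  e 0 5 1 1 (by decide) <|
  e 1 1 5 2 (by decide) <|
  e 5 2 2 0 (by decide) <|
  e 2 0 2 5 (by decide) <|
  e 2 5 4 2 (by decide) <|
  e 4 2 0 3 (by decide) <|
  e 0 3 3 5 (by decide) <|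
  e 3 5 2 1 (by decide) <|
  e 2 1 5 3 (by decide) <|
  e 5 3 3 0 (by decide) <|
  e 3 0 4 4 (by decide) <|
  e 4 4 5 0 (by decide) <|
  Walk.nil

def fullTour : (princeGraph 6 6 5).Walk (0,0) (0,0) :=
  tour.concat (by decide : (princeGraph 6 6 5).Adj (5,0) (0,0))

/-- There exists a closed 5-prince's tour on the 6×6 chessboard. -/
theorem prince5_tour_6x6 :
    ∃ (v : Fin 6 × Fin 6) (p : (princeGraph 6 6 5).Walk v v), p.IsHamiltonianCycle := by
  refine ⟨(0,0), fullTour, ?_, ?_⟩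
  · rw [Walk.isCycle_def, Walk.isTrail_def]
    refine ⟨by decide, by decide, by decide⟩
  · intro a
    revert a
    decide
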